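/- The function A ↦ −log det A is strictly convex on the set of real symmetric positive definite n×n matrices: for distinct positive definite A, B and t ∈ (0,1), −log det(tA + (1−t)B) < −t·log det A − (1−t)·log det B. -/

import Mathlib

open Matrix

open Finset in

lemma posDef_conj_herm {n : Type*} [Fintype n] [DecidableEq n]
    {B S : Matrix n n ℝ} (hB : B.PosDef) (hS : S.IsHermitian) (hSdet : IsUnit S) :
    (S * B * S).PosDef := by
  refine posDef_iff_dotProduct_mulVec.mpr ⟨?_, fun x hx => ?_⟩
  · show (S * B * S)ᴴ = _
    rw [conjTranspose_mul, conjTranspose_mul, hS.eq, hB.1.eq, mul_assoc]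
  · have hy : S *ᵥ x ≠ 0 :=
      ((Matrix.mulVec_injective_iff_isUnit.mpr hSdet).ne_iff' (mulVec_zero S)).2 hx
    have h := hB.dotProduct_mulVec_pos hy
    calc (0:ℝ) < star (S *ᵥ x) ⬝ᵥ (B *ᵥ (S *ᵥ x)) := h
    _ = star x ⬝ᵥ ((S * B * S) *ᵥ x) := by
        simp only [star_mulVec, hS.eq, ← mulVec_mulVec, dotProduct_mulVec]

/-- The function A ↦ −log det A is strictly convex on real symmetric positive
    definite matrices. -/
theorem neg_log_det_strictConvex {n : ℕ}
    (A B : Matrix (Fin n) (Fin n) ℝ) (hA : A.PosDef) (hB : B.PosDef)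
    (hAB : A ≠ B) (t : ℝ) (ht0 : 0 < t) (ht1 : t < 1) :
    -Real.log (t • A + (1 - t) • B).det <
      -(t * Real.log A.det) - (1 - t) * Real.log B.det := by
  classical
  have hAps := hA.posSemidef
  set S : Matrix (Fin n) (Fin n) ℝ := open scoped MatrixOrder in CFC.sqrt A with hSdef
  have hSherm : S.IsHermitian := open scoped MatrixOrder in (Matrix.nonneg_iff_posSemidef.mp (CFC.sqrt_nonneg A)).1
  have hSS : S * S = A := open scoped MatrixOrder in CFC.sqrt_mul_sqrt_self A (Matrix.nonneg_iff_posSemidef.mpr hAps)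
  have hdetS : S.det * S.det = A.det := by rw [← det_mul, hSS]
  have hSdet0 : S.det ≠ 0 := by
    intro h
    exact hA.det_pos.ne' (by rw [← hdetS, h, mul_zero])
  have hSunit : IsUnit S := (Matrix.isUnit_iff_isUnit_det S).2 hSdet0.isUnit
  have hSinvherm : S⁻¹.IsHermitian := hSherm.inv
  have hSinvunit : IsUnit S⁻¹ := (Matrix.isUnit_iff_isUnit_det _).2 (by
    rw [Matrix.det_nonsing_inv, Ring.inverse_eq_inv']
    exact (inv_ne_zero hSdet0).isUnit)
  set M : Matrix (Fin n) (Fin n) ℝ := S⁻¹ * B * S⁻¹ with hMdef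
  have hM : M.PosDef := posDef_conj_herm hB hSinvherm hSinvunit
  have hSMS : S * M * S = B := by
    have h1 : S * S⁻¹ = 1 := Matrix.mul_nonsing_inv S hSdet0.isUnit
    have h2 : S⁻¹ * S = 1 := Matrix.nonsing_inv_mul S hSdet0.isUnit
    calc S * (S⁻¹ * B * S⁻¹) * S = (S * S⁻¹) * B * (S⁻¹ * S) := by
          simp only [Matrix.mul_assoc]
    _ = B := by rw [h1, h2, one_mul, mul_one]
  have key : t • A + (1 - t) • B = S * (t • 1 + (1 - t) • M) * S := by
    rw [Matrix.mul_add, Matrix.add_mul, Matrix.mul_smul, Matrix.mul_one, Matrix.smul_mul, hSS,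
      Matrix.mul_smul, Matrix.smul_mul, hSMS]
  -- eigenvalues of M
  set μ : Fin n → ℝ := hM.1.eigenvalues with hμdef
  have hμpos : ∀ i, 0 < μ i := hM.eigenvalues_pos
  set U : Matrix (Fin n) (Fin n) ℝ := (hM.1.eigenvectorUnitary : Matrix (Fin n) (Fin n) ℝ)
    with hUdef
  have hUU : U * star U = 1 := Matrix.mem_unitaryGroup_iff.mp (hM.1.eigenvectorUnitary).2
  have hspec : M = U * diagonal (RCLike.ofReal ∘ μ) * star U := hM.1.spectral_theorem
  have hDiag : (t • (1 : Matrix (Fin n) (Fin n) ℝ)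
      + (1 - t) • diagonal (RCLike.ofReal ∘ μ)) = diagonal (fun i => t + (1 - t) * μ i) := by
    rw [← Matrix.diagonal_one, ← Matrix.diagonal_smul, ← Matrix.diagonal_smul,
      Matrix.diagonal_add]
    funext i
    simp [smul_eq_mul]
  have hdetMix : (t • (1 : Matrix (Fin n) (Fin n) ℝ) + (1 - t) • M).det
      = ∏ i, (t + (1 - t) * μ i) := by
    have h1 : t • (1 : Matrix (Fin n) (Fin n) ℝ) + (1 - t) • M
        = U * (t • 1 + (1 - t) • diagonal (RCLike.ofReal ∘ μ)) * star U := by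
      rw [Matrix.mul_add, Matrix.add_mul, Matrix.mul_smul, Matrix.mul_one, Matrix.smul_mul, hUU,
        Matrix.mul_smul, Matrix.smul_mul, ← hspec]
    rw [h1, Matrix.det_mul_right_comm, hUU, one_mul, hDiag, det_diagonal]
  have hdetM : M.det = ∏ i, μ i := by
    rw [hspec, Matrix.det_mul_right_comm, hUU, one_mul, det_diagonal]
    rfl
  -- some eigenvalue differs from 1
  have hex : ∃ i, μ i ≠ 1 := by
    by_contra h
    push_neg at h
    have hD1 : diagonal (RCLike.ofReal ∘ μ) = (1 : Matrix (Fin n) (Fin n) ℝ) := by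
      rw [show (RCLike.ofReal ∘ μ : Fin n → ℝ) = fun _ => (1:ℝ) from funext fun i => by
        simp [h i], Matrix.diagonal_one]
    have hM1 : M = 1 := by rw [hspec, hD1, mul_one, hUU]
    have : B = A := by rw [← hSMS, hM1, mul_one, hSS]
    exact hAB this.symm
  obtain ⟨i₀, hi₀⟩ := hex
  -- pointwise log inequality
  have hpt : ∀ i, (1 - t) * Real.log (μ i) ≤ Real.log (t + (1 - t) * μ i) := by
    intro i
    have := strictConcaveOn_log_Ioi.concaveOn.2 (Set.mem_Ioi.2 one_pos)
      (Set.mem_Ioi.2 (hμpos i)) (show (0:ℝ) ≤ t from ht0.le)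
      (show (0:ℝ) ≤ 1 - t by linarith) (show t + (1 - t) = 1 by ring)
    simpa [smul_eq_mul, Real.log_one] using this
  have hptstrict : (1 - t) * Real.log (μ i₀) < Real.log (t + (1 - t) * μ i₀) := by
    have := strictConcaveOn_log_Ioi.2 (Set.mem_Ioi.2 one_pos)
      (Set.mem_Ioi.2 (hμpos i₀)) (fun h => hi₀ h.symm) ht0
      (show (0:ℝ) < 1 - t by linarith) (show t + (1 - t) = 1 by ring)
    simpa [smul_eq_mul, Real.log_one] using this
  have main : ∑ i, (1 - t) * Real.log (μ i) < ∑ i, Real.log (t + (1 - t) * μ i) :=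
    Finset.sum_lt_sum (fun i _ => hpt i) ⟨i₀, Finset.mem_univ i₀, hptstrict⟩
  -- determinant identities
  have hmixpos : ∀ i ∈ Finset.univ, (0:ℝ) < t + (1 - t) * μ i := fun i _ => by
    have := hμpos i; nlinarith
  have hL : (t • A + (1 - t) • B).det = A.det * ∏ i, (t + (1 - t) * μ i) := by
    rw [key, det_mul, det_mul, hdetMix, ← hdetS]; ring
  have hBdet : B.det = A.det * M.det := by
    rw [← hSMS, det_mul, det_mul, ← hdetS]; ring
  have hlogL : Real.log (t • A + (1 - t) • B).det
      = Real.log A.det + ∑ i, Real.log (t + (1 - t) * μ i) := by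
    rw [hL, Real.log_mul hA.det_pos.ne' (Finset.prod_pos hmixpos).ne',
      Real.log_prod (fun i hi => (hmixpos i hi).ne')]
  have hlogB : Real.log B.det = Real.log A.det + ∑ i, Real.log (μ i) := by
    rw [hBdet, Real.log_mul hA.det_pos.ne' hM.det_pos.ne', hdetM,
      Real.log_prod (fun i _ => (hμpos i).ne')]
  have h2 : (1 - t) * Real.log B.det
      = (1 - t) * Real.log A.det + ∑ i, (1 - t) * Real.log (μ i) := by
    rw [hlogB, mul_add, Finset.mul_sum]
  have h3 : (1 - t) * Real.log A.det = Real.log A.det - t * Real.log A.det := by ring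
  linarith [main, hlogL, h2, h3]
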